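/- Let σ, T, σ_β, Σ_T > 0, ψ > 0, m_β ∈ ℝ. Set σ̃² := σ²T + σ_β², λ² := Σ_T²/(σ²T), λ̃² := σ̃²/(σ²T), and ε := 1/√(ψ² λ̃² + λ²). Let Y and W be independent real random variables with Y Gaussian with mean 0 and variance σ²T and W standard Gaussian (mean 0, variance 1). Define Z̃ := −m_β − ε ψ λ̃² Y + ε λ λ̃ σ √T · W and S := ε λ² Y + ε ψ λ λ̃ σ √T · W. Then: Z̃ is Gaussian with mean −m_β and variance σ̃², S is Gaussian with mean 0 and variance Σ_T², Z̃ and S are independent, and Y = ε (S − ψ (Z̃ + m_β)) almost surely. -/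

import Mathlib

open MeasureTheory ProbabilityTheory Real
open scoped ENNReal

noncomputable def rotEquiv (c s : ℝ) (h : c^2 + s^2 = 1) : ℝ × ℝ ≃ᵐ ℝ × ℝ where
  toFun := fun p => (c*p.1 + s*p.2, s*p.1 - c*p.2)
  invFun := fun p => (c*p.1 + s*p.2, s*p.1 - c*p.2)
  left_inv := fun p => by
    obtain ⟨x, y⟩ := p
    simp only [Prod.mk.injEq]
    constructor
    · linear_combination x * h
    · linear_combination y * h
  right_inv := fun p => by
    obtain ⟨x, y⟩ := p
    simp only [Prod.mk.injEq]
    constructor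
    · linear_combination x * h
    · linear_combination y * h
  measurable_toFun := by
    simp only [Equiv.coe_fn_mk]
    fun_prop
  measurable_invFun := by
    simp only [Equiv.coe_fn_symm_mk]
    fun_prop

noncomputable def rotLin (c s : ℝ) : (ℝ × ℝ) →ₗ[ℝ] ℝ × ℝ :=
  (c • LinearMap.fst ℝ ℝ ℝ + s • LinearMap.snd ℝ ℝ ℝ).prod
    (s • LinearMap.fst ℝ ℝ ℝ - c • LinearMap.snd ℝ ℝ ℝ)

lemma rotLin_det (c s : ℝ) (h : c^2 + s^2 = 1) : LinearMap.det (rotLin c s) = -1 := by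
  rw [← LinearMap.det_toMatrix (Module.Basis.finTwoProd ℝ), Matrix.det_fin_two]
  simp [LinearMap.toMatrix_apply, rotLin, Module.Basis.finTwoProd]
  nlinarith

lemma volume_map_rot (c s : ℝ) (h : c^2 + s^2 = 1) :
    (volume : Measure (ℝ × ℝ)).map (rotEquiv c s h) = volume := by
  have hdet : LinearMap.det (rotLin c s) ≠ 0 := by rw [rotLin_det c s h]; norm_num
  have h2 := Measure.map_linearMap_addHaar_eq_smul_addHaar (volume : Measure (ℝ × ℝ)) hdet
  have heq : ⇑(rotLin c s) = ⇑(rotEquiv c s h) := rfl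
  rw [heq] at h2
  rw [h2, rotLin_det c s h]
  norm_num

lemma map_withDensity_equiv {α β : Type*} [MeasurableSpace α] [MeasurableSpace β]
    (e : α ≃ᵐ β) (μ : Measure α) (f : α → ℝ≥0∞) (hf : Measurable f) :
    (μ.withDensity f).map e = (μ.map e).withDensity (f ∘ e.symm) := by
  ext s hs
  rw [e.map_apply, withDensity_apply _ (e.measurable hs), withDensity_apply _ hs,
    setLIntegral_map hs (hf.comp e.symm.measurable) e.measurable]
  simp only [Function.comp_apply, MeasurableEquiv.symm_apply_apply]

lemma prod_withDensity (μ ν : Measure ℝ) [SigmaFinite μ] [SigmaFinite ν]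
    (f g : ℝ → ℝ≥0∞) (hf : Measurable f) (hg : Measurable g)
    [SigmaFinite (μ.withDensity f)] [SigmaFinite (ν.withDensity g)] :
    (μ.withDensity f).prod (ν.withDensity g)
      = (μ.prod ν).withDensity (fun p => f p.1 * g p.2) := by
  refine Measure.prod_eq fun s t hs ht => ?_
  rw [withDensity_apply _ (hs.prod ht), ← Measure.prod_restrict,
    lintegral_prod_mul (hf.aemeasurable) (hg.aemeasurable),
    withDensity_apply _ hs, withDensity_apply _ ht]

lemma gaussianPDFReal_rot (c s x y : ℝ) (h : c^2 + s^2 = 1) :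
    gaussianPDFReal 0 1 (c*x + s*y) * gaussianPDFReal 0 1 (s*x - c*y)
      = gaussianPDFReal 0 1 x * gaussianPDFReal 0 1 y := by
  simp only [gaussianPDFReal, sub_zero]
  rw [mul_mul_mul_comm, ← Real.exp_add, mul_mul_mul_comm, ← Real.exp_add]
  congr 1
  congr 1
  push_cast
  field_simp
  linear_combination (-(x^2+y^2)) * h

lemma gaussian_prod_map_rot (c s : ℝ) (h : c^2 + s^2 = 1) :
    ((gaussianReal 0 1).prod (gaussianReal 0 1)).map (rotEquiv c s h)
      = (gaussianReal 0 1).prod (gaussianReal 0 1) := by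
  have h1 : gaussianReal 0 1 = volume.withDensity (gaussianPDF 0 1) :=
    gaussianReal_of_var_ne_zero 0 one_ne_zero
  haveI : SigmaFinite (volume.withDensity (gaussianPDF 0 1)) := by rw [← h1]; infer_instance
  have hFm : Measurable (fun p : ℝ × ℝ => gaussianPDF 0 1 p.1 * gaussianPDF 0 1 p.2) :=
    ((measurable_gaussianPDF 0 1).comp measurable_fst).mul
      ((measurable_gaussianPDF 0 1).comp measurable_snd)
  rw [h1, prod_withDensity volume volume _ _ (measurable_gaussianPDF 0 1)
      (measurable_gaussianPDF 0 1),
    map_withDensity_equiv _ _ _ hFm]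
  rw [← Measure.volume_eq_prod, volume_map_rot c s h]
  congr 1
  funext p
  show gaussianPDF 0 1 (c*p.1 + s*p.2) * gaussianPDF 0 1 (s*p.1 - c*p.2)
      = gaussianPDF 0 1 p.1 * gaussianPDF 0 1 p.2
  simp only [gaussianPDF]
  rw [← ENNReal.ofReal_mul (gaussianPDFReal_nonneg _ _ _),
    ← ENNReal.ofReal_mul (gaussianPDFReal_nonneg _ _ _),
    gaussianPDFReal_rot _ _ _ _ h]


/-- Lemma 6.3(b): reconstruction of the optimal coupling from independent Gaussians.
With `Y ~ N(0, σ²T)` and `W ~ N(0,1)` independent, the affine combinations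
`Z̃ = −m_β − εψλ̃²Y + ελλ̃σ√T·W` and `S = ελ²Y + εψλλ̃σ√T·W` have the marginal laws
`N(−m_β, σ̃²)` and `N(0, Σ_T²)` respectively, are independent, and satisfy
`Y = ε(S − ψ(Z̃ + m_β))` almost surely.  (`SigT` stands for `Σ_T`.) -/
theorem optimal_coupling_reconstruction
    {Ω : Type*} [MeasurableSpace Ω] (P : Measure Ω) [IsProbabilityMeasure P]
    (σ T σβ SigT ψ mβ : ℝ) (hσ : 0 < σ) (hT : 0 < T) (hσβ : 0 < σβ)
    (hSigT : 0 < SigT) (hψ : 0 < ψ)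
    (Y W : Ω → ℝ) (hYm : Measurable Y) (hWm : Measurable W)
    (hindep : IndepFun Y W P)
    (hYlaw : P.map Y = gaussianReal 0 ((σ^2*T).toNNReal))
    (hWlaw : P.map W = gaussianReal 0 1)
    (lam tlam ε : ℝ)
    (hlam : lam = Real.sqrt (SigT^2 / (σ^2*T)))
    (htlam : tlam = Real.sqrt ((σ^2*T + σβ^2) / (σ^2*T)))
    (hε : ε = 1 / Real.sqrt (ψ^2 * tlam^2 + lam^2))
    (Zt S : Ω → ℝ)
    (hZt : Zt = fun ω => -mβ - ε*ψ*tlam^2 * Y ω + ε*lam*tlam*σ*Real.sqrt T * W ω)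
    (hS : S = fun ω => ε*lam^2 * Y ω + ε*ψ*lam*tlam*σ*Real.sqrt T * W ω) :
    P.map Zt = gaussianReal (-mβ) ((σ^2*T + σβ^2).toNNReal) ∧
    P.map S = gaussianReal 0 ((SigT^2).toNNReal) ∧
    IndepFun Zt S P ∧
    ∀ᵐ ω ∂P, Y ω = ε * (S ω - ψ * (Zt ω + mβ)) := by
  have hsT : 0 < Real.sqrt T := Real.sqrt_pos.mpr hT
  have hk0 : 0 < σ * Real.sqrt T := mul_pos hσ hsT
  have hk2 : (σ * Real.sqrt T)^2 = σ^2*T := by rw [mul_pow, Real.sq_sqrt hT.le]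
  have hst0 : 0 < Real.sqrt (σ^2*T + σβ^2) := Real.sqrt_pos.mpr (by positivity)
  have hst2 : (Real.sqrt (σ^2*T + σβ^2))^2 = σ^2*T + σβ^2 := Real.sq_sqrt (by positivity)
  have hlam0 : 0 < lam := by rw [hlam]; exact Real.sqrt_pos.mpr (by positivity)
  have htlam0 : 0 < tlam := by rw [htlam]; exact Real.sqrt_pos.mpr (by positivity)
  have hlk : lam * (σ * Real.sqrt T) = SigT := by
    rw [hlam, ← hk2, ← div_pow, Real.sqrt_sq (by positivity)]
    field_simp
  have htk : tlam * (σ * Real.sqrt T) = Real.sqrt (σ^2*T + σβ^2) := by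
    rw [htlam, ← hst2, ← hk2, ← div_pow, Real.sqrt_sq (by positivity)]
    field_simp
    rw [Real.sqrt_sq (by positivity)]
  have hD : 0 < ψ^2 * tlam^2 + lam^2 := by positivity
  have hε2 : ε^2 * (ψ^2 * tlam^2 + lam^2) = 1 := by
    rw [hε, div_pow, one_pow, Real.sq_sqrt hD.le]
    field_simp
  have huv : (-(ε*ψ*tlam))^2 + (ε*lam)^2 = 1 := by linear_combination hε2
  -- measurability
  have hZtm : Measurable Zt := by rw [hZt]; fun_prop
  have hSm : Measurable S := by rw [hS]; fun_prop
  -- joint law of (Y, W)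
  have hYW : P.map (fun ω => (Y ω, W ω))
      = (gaussianReal 0 ((σ^2*T).toNNReal)).prod (gaussianReal 0 1) := by
    rw [← hYlaw, ← hWlaw]
    exact (indepFun_iff_map_prod_eq_prod_map_map hYm.aemeasurable hWm.aemeasurable).mp hindep
  -- scaling of the first marginal
  have hν : (gaussianReal 0 1).map ((σ * Real.sqrt T) * ·)
      = gaussianReal 0 ((σ^2*T).toNNReal) := by
    rw [gaussianReal_map_const_mul, mul_zero]
    congr 1
    apply NNReal.coe_injective
    push_cast
    rw [Real.coe_toNNReal _ (by positivity), hk2]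
    ring
  -- the affine map on ℝ²
  set F : ℝ × ℝ → ℝ × ℝ := fun p =>
    (-mβ - ε*ψ*tlam^2 * p.1 + ε*lam*tlam*σ*Real.sqrt T * p.2,
      ε*lam^2 * p.1 + ε*ψ*lam*tlam*σ*Real.sqrt T * p.2) with hF
  have hFm : Measurable F := by rw [hF]; fun_prop
  have hpairm : Measurable (fun ω => (Y ω, W ω)) := hYm.prodMk hWm
  set e := rotEquiv (-(ε*ψ*tlam)) (ε*lam) huv with he
  set D : ℝ × ℝ → ℝ × ℝ :=
    Prod.map (fun x => Real.sqrt (σ^2*T + σβ^2) * x + (-mβ)) (SigT * ·) with hDdef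
  have hDm : Measurable D := by rw [hDdef]; fun_prop
  have hFD : F ∘ Prod.map ((σ * Real.sqrt T) * ·) id = D ∘ e := by
    funext p
    obtain ⟨x, y⟩ := p
    simp only [Function.comp_apply, Prod.map_apply, id_eq, hF, hDdef, he, rotEquiv,
      MeasurableEquiv.coe_mk, Equiv.coe_fn_mk, Prod.mk.injEq]
    constructor
    · linear_combination (-(ε*ψ*tlam)*x + ε*lam*y) * htk
    · linear_combination (ε*lam*x - (-(ε*ψ*tlam))*y) * hlk
  have hmarg1 : (gaussianReal 0 1).map (fun x => Real.sqrt (σ^2*T + σβ^2) * x + (-mβ))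
      = gaussianReal (-mβ) ((σ^2*T + σβ^2).toNNReal) := by
    have hcomp : (fun x : ℝ => Real.sqrt (σ^2*T + σβ^2) * x + (-mβ))
        = (· + (-mβ)) ∘ (Real.sqrt (σ^2*T + σβ^2) * ·) := rfl
    rw [hcomp, ← Measure.map_map (measurable_add_const _) (measurable_const_mul _),
      gaussianReal_map_const_mul, gaussianReal_map_add_const]
    congr 1
    · ring
    · apply NNReal.coe_injective
      push_cast
      rw [Real.coe_toNNReal _ (by positivity), hst2]
      ring
  have hmarg2 : (gaussianReal 0 1).map (SigT * ·) = gaussianReal 0 ((SigT^2).toNNReal) := by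
    rw [gaussianReal_map_const_mul, mul_zero]
    congr 1
    apply NNReal.coe_injective
    push_cast
    rw [Real.coe_toNNReal _ (by positivity)]
    ring
  -- the joint law of (Zt, S)
  have hjoint : P.map (fun ω => (Zt ω, S ω))
      = (gaussianReal (-mβ) ((σ^2*T + σβ^2).toNNReal)).prod
          (gaussianReal 0 ((SigT^2).toNNReal)) := by
    have hcomp : (fun ω => (Zt ω, S ω)) = F ∘ (fun ω => (Y ω, W ω)) := by
      rw [hZt, hS]; rfl
    rw [hcomp, ← Measure.map_map hFm hpairm, hYW]
    calc ((gaussianReal 0 ((σ^2*T).toNNReal)).prod (gaussianReal 0 1)).map F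
        = (((gaussianReal 0 1).prod (gaussianReal 0 1)).map
            (Prod.map ((σ * Real.sqrt T) * ·) id)).map F := by
          rw [← hν]
          congr 1
          rw [← Measure.map_prod_map _ _ (measurable_const_mul _) measurable_id,
            Measure.map_id]
      _ = ((gaussianReal 0 1).prod (gaussianReal 0 1)).map
            (F ∘ Prod.map ((σ * Real.sqrt T) * ·) id) :=
          Measure.map_map hFm ((measurable_const_mul _).prodMap measurable_id)
      _ = ((gaussianReal 0 1).prod (gaussianReal 0 1)).map (D ∘ e) := by rw [hFD]
      _ = (((gaussianReal 0 1).prod (gaussianReal 0 1)).map e).map D :=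
          (Measure.map_map hDm e.measurable).symm
      _ = ((gaussianReal 0 1).prod (gaussianReal 0 1)).map D := by
          rw [he, gaussian_prod_map_rot]
      _ = ((gaussianReal 0 1).map (fun x => Real.sqrt (σ^2*T + σβ^2) * x + (-mβ))).prod
            ((gaussianReal 0 1).map (SigT * ·)) := by
          rw [hDdef, Measure.map_prod_map _ _ ((measurable_const_mul _).add_const _)
            (measurable_const_mul _)]
      _ = (gaussianReal (-mβ) ((σ^2*T + σβ^2).toNNReal)).prod
            (gaussianReal 0 ((SigT^2).toNNReal)) := by rw [hmarg1, hmarg2]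
  -- marginals
  have hZlaw : P.map Zt = gaussianReal (-mβ) ((σ^2*T + σβ^2).toNNReal) := by
    have h1 : Zt = Prod.fst ∘ (fun ω => (Zt ω, S ω)) := rfl
    rw [h1, ← Measure.map_map measurable_fst (hZtm.prodMk hSm), hjoint]
    simp
  have hSlaw : P.map S = gaussianReal 0 ((SigT^2).toNNReal) := by
    have h1 : S = Prod.snd ∘ (fun ω => (Zt ω, S ω)) := rfl
    rw [h1, ← Measure.map_map measurable_snd (hZtm.prodMk hSm), hjoint]
    simp
  refine ⟨hZlaw, hSlaw, ?_, ?_⟩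
  · exact (indepFun_iff_map_prod_eq_prod_map_map hZtm.aemeasurable hSm.aemeasurable).mpr
      (by rw [hjoint, hZlaw, hSlaw])
  · refine Filter.Eventually.of_forall fun ω => ?_
    rw [hZt, hS]
    simp only
    linear_combination (-(Y ω)) * hε2
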